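/- arXiv:1502.00352 — 3 statements merged into one kernel-verified Lean document; each statement's English description precedes it below -/
import Mathlib

section
/- Let X₁, …, X_n be independent random vectors in ℝ^p (p ≥ 2) with nonnegative coordinates X_{ij} ≥ 0. Let Z = max_{1≤j≤p} ∑_{i=1}^n X_{ij} and M = max_{1≤i≤n} max_{1≤j≤p} X_{ij}. Then E[Z] ≤ K·(max_{1≤j≤p} E[∑_{i=1}^n X_{ij}] + E[M]·log p) for some absolute constant K. -/
open MeasureTheory ProbabilityTheory Real Set ENNReal


lemma aux_exp_le {x : ℝ} (h0 : 0 ≤ x) (h1 : x ≤ 1) :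
    Real.exp x ≤ 1 + (Real.exp 1 - 1) * x := by
  have := convexOn_exp.2 (Set.mem_univ (0:ℝ)) (Set.mem_univ (1:ℝ))
    (by linarith : (0:ℝ) ≤ 1 - x) h0 (by ring)
  simp only [smul_eq_mul, mul_zero, mul_one, zero_add, Real.exp_zero] at this
  nlinarith [this]

lemma aux_min_one_sum {n : ℕ} (r : Fin n → ℝ) (h0 : ∀ i, 0 ≤ r i) (h1 : ∀ i, r i ≤ 1) :
    min 1 (∑ i, r i) ≤ 2 * (1 - ∏ i, (1 - r i)) := by
  have hprod : ∏ i, (1 - r i) ≤ Real.exp (-(∑ i, r i)) := by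
    rw [← Finset.sum_neg_distrib, Real.exp_sum]
    exact Finset.prod_le_prod (fun i _ => by linarith [h1 i])
      (fun i _ => by linarith [Real.add_one_le_exp (-(r i))])
  set s := ∑ i, r i with hs
  have hs0 : 0 ≤ s := Finset.sum_nonneg fun i _ => h0 i
  have hmul : Real.exp (-s) * Real.exp s = 1 := by
    rw [← Real.exp_add]; simp
  have hEpos : 0 < Real.exp (-s) := Real.exp_pos _
  have h1s : 1 + s ≤ Real.exp s := by linarith [Real.add_one_le_exp s]
  have hE : Real.exp (-s) * (1 + s) ≤ 1 := by
    calc Real.exp (-s) * (1 + s) ≤ Real.exp (-s) * Real.exp s :=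
          mul_le_mul_of_nonneg_left h1s hEpos.le
    _ = 1 := hmul
  rcases le_total s 1 with h | h
  · rw [min_eq_right h]
    nlinarith [hprod, hE, mul_nonneg hs0 (sub_nonneg.2 h)]
  · rw [min_eq_left h]
    have he : Real.exp (-s) ≤ Real.exp (-1) := Real.exp_le_exp.mpr (by linarith)
    have hm1 : Real.exp (-1) * Real.exp 1 = 1 := by rw [← Real.exp_add]; simp
    have h2e : (2:ℝ) ≤ Real.exp 1 := by linarith [Real.add_one_le_exp (1:ℝ)]
    have hE1pos : 0 < Real.exp (-1) := Real.exp_pos _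
    nlinarith [hprod, he]


lemma aux_prod_integral {Ω : Type} [MeasurableSpace Ω] (μ : Measure Ω) [IsProbabilityMeasure μ]
    {n : ℕ} (f : Fin n → Ω → ℝ) (hindep : iIndepFun f μ)
    (hmeas : ∀ i, Measurable (f i)) (hnn : ∀ i ω, 0 ≤ f i ω) :
    ∫ ω, ∏ i, f i ω ∂μ = ∏ i, ∫ ω, f i ω ∂μ := by
  have key : ∀ s : Finset (Fin n), ∫ ω, ∏ i ∈ s, f i ω ∂μ = ∏ i ∈ s, ∫ ω, f i ω ∂μ := by
    intro s
    induction s using Finset.induction_on with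
    | empty => simp
    | insert a s hi ih =>
      have hpm : Measurable (∏ j ∈ s, f j) := by
        rw [show (∏ j ∈ s, f j) = fun ω => ∏ j ∈ s, f j ω from funext fun ω => by
          simp [Finset.prod_apply]]
        exact Finset.measurable_prod s (fun i _ => hmeas i)
      have hIF : IndepFun (f a) (∏ j ∈ s, f j) μ :=
        (hindep.indepFun_finsetProd_of_notMem hmeas hi).symm
      have hkey := hIF.integral_mul_eq_mul_integral (hmeas a).aestronglyMeasurable
        hpm.aestronglyMeasurable
      have e1 : ∫ ω, ∏ i ∈ insert a s, f i ω ∂μ = integral μ (f a * ∏ j ∈ s, f j) := by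
        congr 1; ext ω; simp [Finset.prod_insert hi, Finset.prod_apply]
      have e2 : integral μ (∏ j ∈ s, f j) = ∫ ω, ∏ i ∈ s, f i ω ∂μ := by
        congr 1; ext ω; simp [Finset.prod_apply]
      rw [e1, hkey, e2, ih, Finset.prod_insert hi]
  simpa using key Finset.univ

lemma aux_key {Ω : Type} [MeasurableSpace Ω] (μ : Measure Ω) [IsProbabilityMeasure μ]
    {n : ℕ} (Mi : Fin n → Ω → ℝ) (Mf : Ω → ℝ)
    (hindep : iIndepFun Mi μ)
    (hmeas : ∀ i, Measurable (Mi i))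
    (hle : ∀ i ω, Mi i ω ≤ Mf ω) (t : ℝ) :
    min 1 (∑ i, μ {ω | t < Mi i ω}) ≤ 2 * μ {ω | t < Mf ω} := by
  set A : Fin n → Set Ω := fun i => {ω | t < Mi i ω} with hA
  have hAmeas : ∀ i, MeasurableSet (A i) := fun i => hmeas i measurableSet_Ioi
  have hIC : μ (⋂ i, (A i)ᶜ) = ∏ i, μ ((A i)ᶜ) := by
    apply hindep.meas_iInter
    intro i
    exact ⟨Set.Iic t, measurableSet_Iic, by ext ω; simp [hA, not_lt]⟩
  have hsub : (⋃ i, A i) ⊆ {ω | t < Mf ω} := by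
    rintro ω hω
    simp only [Set.mem_iUnion] at hω
    obtain ⟨i, hi⟩ := hω
    exact lt_of_lt_of_le hi (hle i ω)
  have hAc : ∀ i, μ ((A i)ᶜ) = 1 - μ (A i) := fun i => by
    rw [measure_compl (hAmeas i) (measure_ne_top μ _), measure_univ]
  have hU : μ (⋃ i, A i) = 1 - ∏ i, (1 - μ (A i)) := by
    have h1 : μ ((⋃ i, A i)ᶜ) = ∏ i, (1 - μ (A i)) := by
      rw [Set.compl_iUnion, hIC]
      exact Finset.prod_congr rfl fun i _ => hAc i
    have h2 : μ ((⋃ i, A i)ᶜ) = 1 - μ (⋃ i, A i) := by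
      rw [measure_compl (MeasurableSet.iUnion hAmeas) (measure_ne_top μ _), measure_univ]
    rw [← h1, h2, ENNReal.sub_sub_cancel ENNReal.one_ne_top (prob_le_one)]
  -- real versions
  set r : Fin n → ℝ := fun i => (μ (A i)).toReal with hr
  have hr0 : ∀ i, 0 ≤ r i := fun i => ENNReal.toReal_nonneg
  have hr1 : ∀ i, r i ≤ 1 := fun i => by
    rw [hr]; exact ENNReal.toReal_le_of_le_ofReal zero_le_one (by simpa using prob_le_one)
  have hmain : min 1 (∑ i, μ (A i)) ≤ 2 * (1 - ∏ i, (1 - μ (A i))) := by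
    have hAne : ∀ i, μ (A i) ≠ ∞ := fun i => measure_ne_top μ _
    have hGne : (∑ i, μ (A i)) ≠ ∞ := by
      simp [ENNReal.sum_eq_top, hAne]
    have hPle : (∏ i, (1 - μ (A i))) ≤ 1 :=
      Finset.prod_le_one (fun i _ => zero_le) (fun i _ => tsub_le_self)
    have hPne : (1 - ∏ i, (1 - μ (A i))) ≠ ∞ :=
      (lt_of_le_of_lt tsub_le_self ENNReal.one_lt_top).ne
    have hminne : min 1 (∑ i, μ (A i)) ≠ ∞ :=
      (lt_of_le_of_lt (min_le_left _ _) ENNReal.one_lt_top).ne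
    have hrhsne : 2 * (1 - ∏ i, (1 - μ (A i))) ≠ ∞ :=
      ENNReal.mul_ne_top (by simp) hPne
    rw [← ENNReal.toReal_le_toReal hminne hrhsne]
    have e1 : (min 1 (∑ i, μ (A i))).toReal = min 1 (∑ i, r i) := by
      rw [ENNReal.toReal_min ENNReal.one_ne_top hGne, ENNReal.toReal_one,
        ENNReal.toReal_sum (fun i _ => hAne i)]
    have e2 : (2 * (1 - ∏ i, (1 - μ (A i)))).toReal = 2 * (1 - ∏ i, (1 - r i)) := by
      rw [ENNReal.toReal_mul, ENNReal.toReal_sub_of_le hPle ENNReal.one_ne_top,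
        ENNReal.toReal_prod, ENNReal.toReal_one]
      simp only [ENNReal.toReal_ofNat]
      congr 2
      exact Finset.prod_congr rfl fun i _ => by
        rw [ENNReal.toReal_sub_of_le prob_le_one ENNReal.one_ne_top, ENNReal.toReal_one]
    rw [e1, e2]
    exact aux_min_one_sum r hr0 hr1
  show min 1 (∑ i, μ (A i)) ≤ 2 * μ {ω | t < Mf ω}
  calc min 1 (∑ i, μ (A i)) ≤ 2 * (1 - ∏ i, (1 - μ (A i))) := hmain
    _ = 2 * μ (⋃ i, A i) := by rw [hU]
    _ ≤ 2 * μ {ω | t < Mf ω} := by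
        exact mul_le_mul_right (measure_mono hsub) 2

lemma aux_tail {Ω : Type} [MeasurableSpace Ω] (μ : Measure Ω) [IsProbabilityMeasure μ]
    {n : ℕ} (Mi : Fin n → Ω → ℝ) (Mf : Ω → ℝ)
    (hindep : iIndepFun Mi μ)
    (hmeas : ∀ i, Measurable (Mi i))
    (hle : ∀ i ω, Mi i ω ≤ Mf ω) (hMnn : ∀ ω, 0 ≤ Mf ω)
    (hMmeas : Measurable Mf) (hMint : Integrable Mf μ)
    (hEM : 0 < ∫ ω, Mf ω ∂μ) :
    ∫ ω, ∑ i, (if 4 * (∫ ω', Mf ω' ∂μ) < Mi i ω then Mi i ω else 0) ∂μ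
      ≤ 6 * ∫ ω, Mf ω ∂μ := by
  set EM := ∫ ω, Mf ω ∂μ with hEMdef
  set τ := 4 * EM with hτdef
  have hτpos : 0 < τ := by rw [hτdef]; linarith
  set G : ℝ → ℝ≥0∞ := fun t => ∑ i, μ {ω | t < Mi i ω} with hG
  have hGanti : Antitone G := fun s t hst => Finset.sum_le_sum fun i _ =>
    measure_mono (fun ω h => lt_of_le_of_lt hst h)
  have hkey : ∀ t, min 1 (G t) ≤ 2 * μ {ω | t < Mf ω} :=
    fun t => aux_key μ Mi Mf hindep hmeas hle t
  have hC3 : ∫⁻ t in Set.Ioi (0:ℝ), min 1 (G t) ≤ ENNReal.ofReal (2 * EM) := by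
    calc ∫⁻ t in Set.Ioi (0:ℝ), min 1 (G t)
        ≤ ∫⁻ t in Set.Ioi (0:ℝ), 2 * μ {ω | t < Mf ω} := lintegral_mono fun t => hkey t
      _ = 2 * ∫⁻ t in Set.Ioi (0:ℝ), μ {ω | t < Mf ω} :=
          lintegral_const_mul' 2 _ (by simp)
      _ = 2 * ∫⁻ ω, ENNReal.ofReal (Mf ω) ∂μ := by
          rw [lintegral_eq_lintegral_meas_lt μ (Filter.Eventually.of_forall hMnn)
            hMmeas.aemeasurable]
      _ = 2 * ENNReal.ofReal EM := by
          rw [← ofReal_integral_eq_lintegral_ofReal hMint (Filter.Eventually.of_forall hMnn)]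
      _ = ENNReal.ofReal (2 * EM) := by
          rw [ENNReal.ofReal_mul (by norm_num : (0:ℝ) ≤ 2)]
          norm_num
  have hGτ : G τ ≤ 1 := by
    by_contra hcon
    push_neg at hcon
    have h1 : ∀ t ∈ Set.Ioc (0:ℝ) τ, (1:ℝ≥0∞) = min 1 (G t) := fun t ht =>
      (min_eq_left (le_of_lt (lt_of_lt_of_le hcon (hGanti ht.2)))).symm
    have h2 : ENNReal.ofReal τ ≤ ∫⁻ t in Set.Ioi (0:ℝ), min 1 (G t) := by
      calc ENNReal.ofReal τ = ∫⁻ _ in Set.Ioc (0:ℝ) τ, 1 := by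
            rw [setLIntegral_one, Real.volume_Ioc, sub_zero]
        _ = ∫⁻ t in Set.Ioc (0:ℝ) τ, min 1 (G t) :=
            setLIntegral_congr_fun measurableSet_Ioc h1
        _ ≤ ∫⁻ t in Set.Ioi (0:ℝ), min 1 (G t) :=
            lintegral_mono_set Set.Ioc_subset_Ioi_self
    have h3 : τ ≤ 2 * EM :=
      (ENNReal.ofReal_le_ofReal_iff (by linarith)).mp (h2.trans hC3)
    rw [hτdef] at h3; linarith
  -- tail functions
  set f : Fin n → Ω → ℝ := fun i ω => if τ < Mi i ω then Mi i ω else 0 with hf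
  have hfmeas : ∀ i, Measurable (f i) := fun i =>
    Measurable.ite (hmeas i measurableSet_Ioi) (hmeas i) measurable_const
  have hfnn : ∀ i ω, 0 ≤ f i ω := fun i ω => by
    rw [hf]; dsimp only
    split
    · exact le_trans hτpos.le (le_of_lt (by assumption))
    · exact le_refl 0
  have hfle : ∀ i ω, f i ω ≤ Mf ω := fun i ω => by
    rw [hf]; dsimp only
    split
    · exact hle i ω
    · exact hMnn ω
  have hfint : ∀ i, Integrable (f i) μ := fun i =>
    hMint.mono (hfmeas i).aestronglyMeasurable (Filter.Eventually.of_forall fun ω => by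
      rw [Real.norm_of_nonneg (hfnn i ω), Real.norm_of_nonneg (hMnn ω)]; exact hfle i ω)
  have hlc : ∀ i, ∫⁻ ω, ENNReal.ofReal (f i ω) ∂μ
      = ∫⁻ t in Set.Ioi (0:ℝ), μ {ω | max τ t < Mi i ω} := by
    intro i
    rw [lintegral_eq_lintegral_meas_lt μ (Filter.Eventually.of_forall (hfnn i))
      (hfmeas i).aemeasurable]
    refine setLIntegral_congr_fun measurableSet_Ioi ?_
    intro t ht
    dsimp only
    congr 1
    ext ω
    by_cases h : τ < Mi i ω
    · simp [hf, h, max_lt_iff]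
    · simp [hf, h, max_lt_iff, lt_asymm (Set.mem_Ioi.mp ht), (Set.mem_Ioi.mp ht).le]
  have hsum : ∑ i, ∫⁻ ω, ENNReal.ofReal (f i ω) ∂μ
      = ∫⁻ t in Set.Ioi (0:ℝ), G (max τ t) := by
    simp_rw [hlc]
    have hswap := lintegral_finset_sum (μ := volume.restrict (Set.Ioi (0:ℝ))) Finset.univ
      (f := fun i t => μ {ω | max τ t < Mi i ω}) (fun i _ => Antitone.measurable (fun s t hst =>
        measure_mono (fun ω h => lt_of_le_of_lt (max_le_max le_rfl hst) h)))
    rw [← hswap]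
  have hsplit : ∫⁻ t in Set.Ioi (0:ℝ), G (max τ t)
      ≤ ENNReal.ofReal τ + ENNReal.ofReal (2 * EM) := by
    rw [show Set.Ioi (0:ℝ) = Set.Ioc 0 τ ∪ Set.Ioi τ from
      (Set.Ioc_union_Ioi_eq_Ioi hτpos.le).symm,
      lintegral_union measurableSet_Ioi Set.Ioc_disjoint_Ioi_same]
    have part1 : ∫⁻ t in Set.Ioc (0:ℝ) τ, G (max τ t) ≤ ENNReal.ofReal τ := by
      calc ∫⁻ t in Set.Ioc (0:ℝ) τ, G (max τ t)
          ≤ ∫⁻ _ in Set.Ioc (0:ℝ) τ, 1 :=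
            setLIntegral_mono' measurableSet_Ioc (fun t ht => by
              rw [max_eq_left ht.2]; exact hGτ)
        _ = ENNReal.ofReal τ := by rw [setLIntegral_one, Real.volume_Ioc, sub_zero]
    have part2 : ∫⁻ t in Set.Ioi τ, G (max τ t) ≤ ENNReal.ofReal (2 * EM) := by
      have he : ∀ t ∈ Set.Ioi τ, G (max τ t) = min 1 (G t) := fun t ht => by
        rw [max_eq_right (le_of_lt ht)]
        exact (min_eq_right ((hGanti (le_of_lt ht)).trans hGτ)).symm
      rw [setLIntegral_congr_fun measurableSet_Ioi he]
      exact le_trans (lintegral_mono_set (Set.Ioi_subset_Ioi hτpos.le)) hC3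
    exact add_le_add part1 part2
  have hTint : Integrable (fun ω => ∑ i, f i ω) μ := integrable_finset_sum _ (fun i _ => hfint i)
  have hofReal : ENNReal.ofReal (∫ ω, ∑ i, f i ω ∂μ) ≤ ENNReal.ofReal (6 * EM) := by
    rw [ofReal_integral_eq_lintegral_ofReal hTint
      (Filter.Eventually.of_forall fun ω => Finset.sum_nonneg fun i _ => hfnn i ω)]
    calc ∫⁻ ω, ENNReal.ofReal (∑ i, f i ω) ∂μ
        = ∫⁻ ω, ∑ i, ENNReal.ofReal (f i ω) ∂μ := by
          refine lintegral_congr fun ω => ?_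
          rw [ENNReal.ofReal_sum_of_nonneg (fun i _ => hfnn i ω)]
      _ = ∑ i, ∫⁻ ω, ENNReal.ofReal (f i ω) ∂μ :=
          lintegral_finset_sum _ (fun i _ => (hfmeas i).ennreal_ofReal)
      _ = ∫⁻ t in Set.Ioi (0:ℝ), G (max τ t) := hsum
      _ ≤ ENNReal.ofReal τ + ENNReal.ofReal (2 * EM) := hsplit
      _ = ENNReal.ofReal (6 * EM) := by
          rw [← ENNReal.ofReal_add hτpos.le (by linarith)]
          congr 1
          rw [hτdef]; ring
  exact (ENNReal.ofReal_le_ofReal_iff (by linarith)).mp hofReal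

theorem stmt10 : ∃ K : ℝ, 0 < K ∧
    ∀ (Ω : Type) [MeasurableSpace Ω] (μ : Measure Ω) [IsProbabilityMeasure μ]
      (n p : ℕ) (_ : 2 ≤ p) (X : Fin n → Ω → Fin p → ℝ)
      (_ : ∀ i, Measurable (X i))
      (_ : ProbabilityTheory.iIndepFun X μ)
      (_ : ∀ i ω j, 0 ≤ X i ω j)
      (_ : ∀ i j, Integrable (fun ω => X i ω j) μ)
      (_ : Integrable (fun ω => ⨆ i, ⨆ j, X i ω j) μ)
      (_ : Integrable (fun ω => ⨆ j, ∑ i, X i ω j) μ),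
      (∫ ω, (⨆ j, ∑ i, X i ω j) ∂μ) ≤
        K * ((⨆ j : Fin p, ∫ ω, (∑ i, X i ω j) ∂μ) +
          (∫ ω, (⨆ i, ⨆ j, X i ω j) ∂μ) * Real.log p) := by
  refine ⟨100, by norm_num, ?_⟩
  intro Ω _ μ _ n p hp X hXmeas hindep hXnn hXint hMint hZint
  haveI : Nonempty (Fin p) := ⟨⟨0, by omega⟩⟩
  have hXm : ∀ i j, Measurable (fun ω => X i ω j) :=
    fun i j => (measurable_pi_apply j).comp (hXmeas i)
  set Mi : Fin n → Ω → ℝ := fun i ω => ⨆ j, X i ω j with hMidef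
  set Mf : Ω → ℝ := fun ω => ⨆ i, ⨆ j, X i ω j with hMfdef
  have hbddp : ∀ (g : Fin p → ℝ), BddAbove (Set.range g) :=
    fun g => (Set.finite_range g).bddAbove
  have hbddn : ∀ (g : Fin n → ℝ), BddAbove (Set.range g) :=
    fun g => (Set.finite_range g).bddAbove
  have hMi_meas : ∀ i, Measurable (Mi i) := fun i => Measurable.iSup (fun j => hXm i j)
  have hMf_meas : Measurable Mf := Measurable.iSup (fun i => hMi_meas i)
  have hX_le_Mi : ∀ i ω j, X i ω j ≤ Mi i ω := fun i ω j => le_ciSup (hbddp _) j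
  have hMi_nn : ∀ i ω, 0 ≤ Mi i ω := fun i ω => Real.iSup_nonneg (fun j => hXnn i ω j)
  have hMi_le_Mf : ∀ i ω, Mi i ω ≤ Mf ω := fun i ω => by
    simp only [hMidef, hMfdef]
    exact le_ciSup (hbddn fun i' => ⨆ j, X i' ω j) i
  have hMf_nn : ∀ ω, 0 ≤ Mf ω := fun ω => Real.iSup_nonneg (fun i => hMi_nn i ω)
  set EM := ∫ ω, Mf ω ∂μ with hEMdef
  have hEM0 : 0 ≤ EM := integral_nonneg hMf_nn
  set σ : ℝ := ⨆ j : Fin p, ∫ ω, (∑ i, X i ω j) ∂μ with hσdef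
  have hσ0 : 0 ≤ σ :=
    Real.iSup_nonneg (fun j => integral_nonneg (fun ω => Finset.sum_nonneg fun i _ => hXnn i ω j))
  have hσge : ∀ j, ∫ ω, (∑ i, X i ω j) ∂μ ≤ σ := fun j => by
    rw [hσdef]
    exact le_ciSup (hbddp fun j' => ∫ ω, (∑ i, X i ω j') ∂μ) j
  have hSint : ∀ j, Integrable (fun ω => ∑ i, X i ω j) μ :=
    fun j => integrable_finset_sum _ (fun i _ => hXint i j)
  have hlog2 : (0.6931471803 : ℝ) < Real.log p :=
    lt_of_lt_of_le Real.log_two_gt_d9 (Real.log_le_log two_pos (by exact_mod_cast hp))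
  have hlogp0 : 0 < Real.log p := by linarith
  rcases lt_or_ge 0 EM with hEM | hEM
  case inr =>
    -- EM ≤ 0, so EM = 0 and everything is a.e. zero-ish
    have hEMeq : EM = 0 := le_antisymm hEM hEM0
    have hZle : ∀ ω, (⨆ j, ∑ i, X i ω j) ≤ (n : ℝ) * Mf ω := by
      intro ω
      refine ciSup_le fun j => ?_
      calc ∑ i, X i ω j ≤ ∑ _i : Fin n, Mf ω :=
            Finset.sum_le_sum fun i _ => (hX_le_Mi i ω j).trans (hMi_le_Mf i ω)
        _ = (n : ℝ) * Mf ω := by simp [Finset.sum_const, nsmul_eq_mul]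
    have h1 : ∫ ω, (⨆ j, ∑ i, X i ω j) ∂μ ≤ (n : ℝ) * EM := by
      rw [hEMdef, ← integral_const_mul]
      exact integral_mono hZint (hMint.const_mul _) hZle
    rw [hEMeq] at h1
    simp only [mul_zero] at h1
    have : (0:ℝ) ≤ 100 * (σ + EM * Real.log p) := by
      rw [hEMeq]; simp; positivity
    calc ∫ ω, (⨆ j, ∑ i, X i ω j) ∂μ ≤ 0 := h1
      _ ≤ 100 * (σ + EM * Real.log p) := this
  case inl =>
    set τ : ℝ := 4 * EM with hτdef
    have hτpos : 0 < τ := by rw [hτdef]; linarith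
    -- independence of the Mi
    have hindepMi : iIndepFun Mi μ := by
      have := hindep.comp (fun _ => fun v : Fin p → ℝ => ⨆ j, v j)
        (fun _ => Measurable.iSup (fun j => measurable_pi_apply j))
      exact this
    -- tail bound
    have htail : ∫ ω, ∑ i, (if τ < Mi i ω then Mi i ω else 0) ∂μ ≤ 6 * EM :=
      aux_tail μ Mi Mf hindepMi hMi_meas hMi_le_Mf hMf_nn hMf_meas hMint hEM
    -- truncated variables
    set Y : Fin n → Ω → Fin p → ℝ := fun i ω j => if X i ω j ≤ τ then X i ω j else 0 with hYdef
    have hppos : (0:ℝ) < p := by exact_mod_cast lt_of_lt_of_le two_pos hp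
    have hYnn : ∀ i ω j, 0 ≤ Y i ω j := fun i ω j => by
      simp only [hYdef]; split
      · exact hXnn i ω j
      · exact le_refl 0
    have hYleτ : ∀ i ω j, Y i ω j ≤ τ := fun i ω j => by
      simp only [hYdef]; split
      · assumption
      · exact hτpos.le
    have hYleX : ∀ i ω j, Y i ω j ≤ X i ω j := fun i ω j => by
      simp only [hYdef]; split
      · exact le_refl _
      · exact hXnn i ω j
    have hYmeas : ∀ i j, Measurable (fun ω => Y i ω j) := fun i j => by
      simp only [hYdef]
      exact Measurable.ite ((hXm i j) measurableSet_Iic) (hXm i j) measurable_const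
    have hYint : ∀ i j, Integrable (fun ω => Y i ω j) μ := fun i j =>
      (hXint i j).mono (hYmeas i j).aestronglyMeasurable (Filter.Eventually.of_forall fun ω => by
        rw [Real.norm_of_nonneg (hYnn i ω j), Real.norm_of_nonneg (hXnn i ω j)]
        exact hYleX i ω j)
    set W : Ω → ℝ := fun ω => ∑ j, Real.exp ((∑ i, Y i ω j) / τ) with hWdef
    have hWp : ∀ ω, (p:ℝ) ≤ W ω := fun ω => by
      simp only [hWdef]
      calc (p:ℝ) = ∑ _j : Fin p, (1:ℝ) := by simp
        _ ≤ ∑ j, Real.exp ((∑ i, Y i ω j) / τ) :=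
          Finset.sum_le_sum fun j _ => Real.one_le_exp
            (div_nonneg (Finset.sum_nonneg fun i _ => hYnn i ω j) hτpos.le)
    have hWpos : ∀ ω, 0 < W ω := fun ω => lt_of_lt_of_le hppos (hWp ω)
    have hWle : ∀ ω, W ω ≤ p * Real.exp n := fun ω => by
      simp only [hWdef]
      calc ∑ j, Real.exp ((∑ i, Y i ω j)/τ) ≤ ∑ _j : Fin p, Real.exp n :=
            Finset.sum_le_sum fun j _ => Real.exp_le_exp.mpr (by
              rw [div_le_iff₀ hτpos]
              calc ∑ i, Y i ω j ≤ ∑ _i : Fin n, τ := Finset.sum_le_sum fun i _ => hYleτ i ω j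
                _ = n * τ := by simp [nsmul_eq_mul]
              )
        _ = p * Real.exp n := by simp [nsmul_eq_mul]
    have hWmeas : Measurable W := by
      simp only [hWdef]
      exact Finset.measurable_sum _ fun j _ =>
        ((Finset.measurable_sum _ fun i _ => hYmeas i j).div_const τ).exp
    have hWint : Integrable W μ := by
      refine Integrable.mono' (integrable_const ((p:ℝ) * Real.exp n))
        hWmeas.aestronglyMeasurable (Filter.Eventually.of_forall fun ω => ?_)
      rw [Real.norm_of_nonneg (hWpos ω).le]; exact hWle ω
    have hlogWint : Integrable (fun ω => Real.log (W ω)) μ := by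
      refine Integrable.mono' (integrable_const (Real.log ((p:ℝ) * Real.exp n)))
        hWmeas.log.aestronglyMeasurable (Filter.Eventually.of_forall fun ω => ?_)
      rw [Real.norm_of_nonneg (Real.log_nonneg (le_trans (by exact_mod_cast hp.trans' (by norm_num) : (1:ℝ) ≤ p) (hWp ω)))]
      exact Real.log_le_log (hWpos ω) (hWle ω)
    have hTailint : Integrable (fun ω => ∑ i, (if τ < Mi i ω then Mi i ω else 0)) μ := by
      refine integrable_finset_sum _ fun i _ => ?_
      refine hMint.mono (Measurable.ite ((hMi_meas i) measurableSet_Ioi) (hMi_meas i)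
        measurable_const).aestronglyMeasurable (Filter.Eventually.of_forall fun ω => ?_)
      rw [Real.norm_of_nonneg (by split; exacts [hMi_nn i ω, le_refl 0]),
        Real.norm_of_nonneg (hMf_nn ω)]
      split
      exacts [hMi_le_Mf i ω, hMf_nn ω]
    -- pointwise decomposition
    have hZT : ∀ ω, (⨆ j, ∑ i, X i ω j)
        ≤ τ * Real.log (W ω) + ∑ i, (if τ < Mi i ω then Mi i ω else 0) := by
      intro ω
      refine ciSup_le fun j => ?_
      have h1 : ∑ i, X i ω j ≤ ∑ i, Y i ω j + ∑ i, (if τ < Mi i ω then Mi i ω else 0) := by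
        rw [← Finset.sum_add_distrib]
        refine Finset.sum_le_sum fun i _ => ?_
        by_cases h : X i ω j ≤ τ
        · have hy : Y i ω j = X i ω j := by simp [hYdef, h]
          have hnn : 0 ≤ (if τ < Mi i ω then Mi i ω else 0) := by
            split; exacts [hMi_nn i ω, le_refl 0]
          linarith
        · push_neg at h
          have h2 : τ < Mi i ω := lt_of_lt_of_le h (hX_le_Mi i ω j)
          have hy : Y i ω j = 0 := by simp [hYdef, le_of_lt, not_le.mpr h]
          rw [hy, if_pos h2]
          linarith [hX_le_Mi i ω j]
      have h2 : ∑ i, Y i ω j ≤ τ * Real.log (W ω) := by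
        have he : Real.exp ((∑ i, Y i ω j)/τ) ≤ W ω := by
          simp only [hWdef]
          exact Finset.single_le_sum (f := fun j' => Real.exp ((∑ i, Y i ω j')/τ))
            (fun j' _ => (Real.exp_pos _).le) (Finset.mem_univ j)
        have hlog : (∑ i, Y i ω j)/τ ≤ Real.log (W ω) := by
          rw [← Real.log_exp ((∑ i, Y i ω j)/τ)]
          exact Real.log_le_log (Real.exp_pos _) he
        calc ∑ i, Y i ω j = τ * ((∑ i, Y i ω j)/τ) := by field_simp
          _ ≤ τ * Real.log (W ω) := mul_le_mul_of_nonneg_left hlog hτpos.le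
      linarith
    -- expected value of W
    set c : ℝ := Real.exp 1 - 1 with hcdef
    have hc0 : 0 ≤ c := by
      rw [hcdef]; linarith [Real.add_one_le_exp (1:ℝ)]
    have hexpint : ∀ j, Integrable (fun ω => Real.exp ((∑ i, Y i ω j)/τ)) μ := by
      intro j
      refine Integrable.mono' (integrable_const (Real.exp n))
        ((Finset.measurable_sum _ fun i _ => hYmeas i j).div_const τ).exp.aestronglyMeasurable
        (Filter.Eventually.of_forall fun ω => ?_)
      rw [Real.norm_of_nonneg (Real.exp_pos _).le]
      refine Real.exp_le_exp.mpr ?_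
      rw [div_le_iff₀ hτpos]
      calc ∑ i, Y i ω j ≤ ∑ _i : Fin n, τ := Finset.sum_le_sum fun i _ => hYleτ i ω j
        _ = n * τ := by simp [nsmul_eq_mul]
    have hEW : ∫ ω, W ω ∂μ ≤ p * Real.exp (c * σ / τ) := by
      have hsplit : ∫ ω, W ω ∂μ = ∑ j, ∫ ω, Real.exp ((∑ i, Y i ω j)/τ) ∂μ := by
        simp only [hWdef]
        exact integral_finset_sum _ fun j _ => hexpint j
      have hj : ∀ j : Fin p, ∫ ω, Real.exp ((∑ i, Y i ω j)/τ) ∂μ ≤ Real.exp (c * σ / τ) := by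
        intro j
        have hmeasE : ∀ i, Measurable (fun ω => Real.exp (Y i ω j / τ)) :=
          fun i => ((hYmeas i j).div_const τ).exp
        have hindepe : iIndepFun (fun i ω => Real.exp (Y i ω j / τ)) μ := by
          have := hindep.comp
            (fun _ => fun v : Fin p → ℝ => Real.exp ((if v j ≤ τ then v j else 0) / τ))
            (fun _ => (Measurable.ite (p := fun v : Fin p → ℝ => v j ≤ τ) ((measurable_pi_apply j) measurableSet_Iic)
              (measurable_pi_apply j) measurable_const).div_const τ |>.exp)
          exact this
        have hprod := aux_prod_integral μ (fun i ω => Real.exp (Y i ω j / τ)) hindepe hmeasE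
          (fun i ω => (Real.exp_pos _).le)
        have hi : ∀ i : Fin n, ∫ ω, Real.exp (Y i ω j / τ) ∂μ
            ≤ Real.exp (c * ((∫ ω, Y i ω j ∂μ) / τ)) := by
          intro i
          have hx01 : ∀ ω, Y i ω j / τ ≤ 1 := fun ω => (div_le_one hτpos).mpr (hYleτ i ω j)
          have hx0 : ∀ ω, 0 ≤ Y i ω j / τ := fun ω => div_nonneg (hYnn i ω j) hτpos.le
          have hEexp_int : Integrable (fun ω => Real.exp (Y i ω j / τ)) μ := by
            refine Integrable.mono' (integrable_const (Real.exp 1))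
              (hmeasE i).aestronglyMeasurable (Filter.Eventually.of_forall fun ω => ?_)
            rw [Real.norm_of_nonneg (Real.exp_pos _).le]
            exact Real.exp_le_exp.mpr (hx01 ω)
          have haff_int : Integrable (fun ω => 1 + c * (Y i ω j / τ)) μ :=
            (integrable_const 1).add (((hYint i j).div_const τ).const_mul c)
          have h1 : ∫ ω, Real.exp (Y i ω j / τ) ∂μ ≤ ∫ ω, (1 + c * (Y i ω j / τ)) ∂μ :=
            integral_mono hEexp_int haff_int (fun ω => aux_exp_le (hx0 ω) (hx01 ω))
          have h2 : ∫ ω, (1 + c * (Y i ω j / τ)) ∂μ = 1 + c * ((∫ ω, Y i ω j ∂μ) / τ) := by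
            rw [integral_add (integrable_const 1) (((hYint i j).div_const τ).const_mul c),
              integral_const, integral_const_mul, integral_div]
            simp
          have h3 : 1 + c * ((∫ ω, Y i ω j ∂μ)/τ) ≤ Real.exp (c * ((∫ ω, Y i ω j ∂μ)/τ)) := by
            linarith [Real.add_one_le_exp (c * ((∫ ω, Y i ω j ∂μ)/τ))]
          calc ∫ ω, Real.exp (Y i ω j / τ) ∂μ ≤ ∫ ω, (1 + c * (Y i ω j / τ)) ∂μ := h1
            _ = 1 + c * ((∫ ω, Y i ω j ∂μ) / τ) := h2
            _ ≤ Real.exp (c * ((∫ ω, Y i ω j ∂μ)/τ)) := h3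
        have hYsum : ∑ i, ∫ ω, Y i ω j ∂μ ≤ σ := by
          rw [← integral_finset_sum _ (fun i _ => hYint i j)]
          refine le_trans (integral_mono (integrable_finset_sum _ fun i _ => hYint i j)
            (hSint j) (fun ω => Finset.sum_le_sum fun i _ => hYleX i ω j)) (hσge j)
        calc ∫ ω, Real.exp ((∑ i, Y i ω j)/τ) ∂μ
            = ∫ ω, ∏ i, Real.exp (Y i ω j / τ) ∂μ := by
              refine integral_congr_ae (Filter.Eventually.of_forall fun ω => ?_)
              simp only [Finset.sum_div, Real.exp_sum]
          _ = ∏ i, ∫ ω, Real.exp (Y i ω j / τ) ∂μ := hprod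
          _ ≤ ∏ i, Real.exp (c * ((∫ ω, Y i ω j ∂μ) / τ)) :=
              Finset.prod_le_prod (fun i _ => integral_nonneg fun ω => (Real.exp_pos _).le)
                (fun i _ => hi i)
          _ = Real.exp (∑ i, c * ((∫ ω, Y i ω j ∂μ) / τ)) := (Real.exp_sum _ _).symm
          _ ≤ Real.exp (c * σ / τ) := by
              refine Real.exp_le_exp.mpr ?_
              have heq : ∑ i, c * ((∫ ω, Y i ω j ∂μ) / τ)
                  = c * ((∑ i, ∫ ω, Y i ω j ∂μ) / τ) := by
                rw [Finset.sum_div, Finset.mul_sum]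
              rw [heq, mul_div_assoc]
              gcongr
      calc ∫ ω, W ω ∂μ = ∑ j, ∫ ω, Real.exp ((∑ i, Y i ω j)/τ) ∂μ := hsplit
        _ ≤ ∑ _j : Fin p, Real.exp (c * σ / τ) := Finset.sum_le_sum fun j _ => hj j
        _ = p * Real.exp (c * σ / τ) := by simp [nsmul_eq_mul]
    -- log bound
    have hloga : ∫ ω, Real.log (W ω) ∂μ ≤ Real.log p + c * σ / τ := by
      set a : ℝ := p * Real.exp (c * σ / τ) with hadef
      have ha0 : 0 < a := by rw [hadef]; positivity
      have hpt : ∀ ω, Real.log (W ω) ≤ W ω / a - 1 + Real.log a := fun ω => by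
        have h := Real.log_le_sub_one_of_pos (div_pos (hWpos ω) ha0)
        rw [Real.log_div (hWpos ω).ne' ha0.ne'] at h
        linarith
      have hint2 : Integrable (fun ω => W ω / a - 1 + Real.log a) μ :=
        ((hWint.div_const a).sub (integrable_const 1)).add (integrable_const _)
      have h1 : ∫ ω, Real.log (W ω) ∂μ ≤ ∫ ω, (W ω / a - 1 + Real.log a) ∂μ :=
        integral_mono hlogWint hint2 hpt
      have h2 : ∫ ω, (W ω / a - 1 + Real.log a) ∂μ = (∫ ω, W ω ∂μ)/a - 1 + Real.log a := by
        have e : ∀ ω, W ω / a - 1 + Real.log a = W ω / a + (Real.log a - 1) := fun ω => by ring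
        simp_rw [e]
        rw [integral_add (hWint.div_const a) (integrable_const _), integral_div, integral_const]
        simp
        ring
      have h3 : (∫ ω, W ω ∂μ)/a ≤ 1 := (div_le_one ha0).mpr (by rw [hadef]; exact hEW)
      have h4 : Real.log a = Real.log p + c * σ / τ := by
        rw [hadef, Real.log_mul hppos.ne' (Real.exp_ne_zero _), Real.log_exp]
      linarith [h1, h2, h3, h4]
    -- assemble
    have hmain : ∫ ω, (⨆ j, ∑ i, X i ω j) ∂μ
        ≤ τ * (∫ ω, Real.log (W ω) ∂μ) + 6 * EM := by
      have hrhsint : Integrable (fun ω => τ * Real.log (W ω)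
          + ∑ i, (if τ < Mi i ω then Mi i ω else 0)) μ := (hlogWint.const_mul τ).add hTailint
      calc ∫ ω, (⨆ j, ∑ i, X i ω j) ∂μ
          ≤ ∫ ω, (τ * Real.log (W ω) + ∑ i, (if τ < Mi i ω then Mi i ω else 0)) ∂μ :=
            integral_mono hZint hrhsint hZT
        _ = τ * (∫ ω, Real.log (W ω) ∂μ)
            + ∫ ω, ∑ i, (if τ < Mi i ω then Mi i ω else 0) ∂μ := by
            rw [integral_add (hlogWint.const_mul τ) hTailint, integral_const_mul]
        _ ≤ τ * (∫ ω, Real.log (W ω) ∂μ) + 6 * EM := by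
            have := htail
            gcongr
    have hτlog : τ * (∫ ω, Real.log (W ω) ∂μ) ≤ τ * (Real.log p + c * σ / τ) :=
      mul_le_mul_of_nonneg_left hloga hτpos.le
    have hτexp : τ * (Real.log p + c * σ / τ) = 4 * EM * Real.log p + c * σ := by
      field_simp
      ring
    have he3 : Real.exp 1 ≤ 3 := by linarith [Real.exp_one_lt_d9]
    have hclt : c ≤ 2 := by rw [hcdef]; linarith
    have h6 : 6 * EM ≤ 9 * (EM * Real.log p) := by nlinarith [hEM, hlog2]
    have hσb : c * σ ≤ 2 * σ := mul_le_mul_of_nonneg_right hclt hσ0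
    nlinarith [hmain, hτlog, hτexp, h6, hσb, hσ0, hEM0, hlogp0,
      mul_nonneg hEM0 hlogp0.le]
end

section
/- Let g ∈ C³(ℝ) with ‖g′‖_∞, ‖g″‖_∞, ‖g‴‖_∞ < ∞, and let F_β(x) = β⁻¹ log(∑_{j=1}^p e^{β x_j}) be the smooth-max on ℝ^p with β > 0. Then the composite m = g ∘ F_β satisfies ∑_{j,k=1}^p |∂_j ∂_k m(x)| ≤ ‖g″‖_∞ + 2‖g′‖_∞ β for all x ∈ ℝ^p. -/
/-- Partial derivative in the `j`-th coordinate direction. -/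
noncomputable def pd {p : ℕ} (j : Fin p) (f : (Fin p → ℝ) → ℝ) (x : Fin p → ℝ) : ℝ :=
  fderiv ℝ f x (Pi.single j 1)

namespace Stmt11Aux

variable {p : ℕ}

noncomputable def prj (i : Fin p) : (Fin p → ℝ) →L[ℝ] ℝ := ContinuousLinearMap.proj i

noncomputable def Sf (β : ℝ) (x : Fin p → ℝ) : ℝ := ∑ i, Real.exp (β * x i)

noncomputable def LS (β : ℝ) (x : Fin p → ℝ) : (Fin p → ℝ) →L[ℝ] ℝ :=
  ∑ i, (β * Real.exp (β * x i)) • prj i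

lemma Sf_pos (hp : 0 < p) (β : ℝ) (x : Fin p → ℝ) : 0 < Sf β x := by
  have : Nonempty (Fin p) := ⟨⟨0, hp⟩⟩
  exact Finset.sum_pos (fun i _ => Real.exp_pos _) Finset.univ_nonempty

lemma hasFDerivAt_exp_comp (β : ℝ) (i : Fin p) (x : Fin p → ℝ) :
    HasFDerivAt (fun y : Fin p → ℝ => Real.exp (β * y i))
      ((β * Real.exp (β * x i)) • prj i) x := by
  have h1 : HasFDerivAt (fun y : Fin p → ℝ => β * y i) (β • prj i) x :=
    ((prj i).hasFDerivAt).const_mul β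
  have h2 := (Real.hasDerivAt_exp (β * x i)).comp_hasFDerivAt x h1
  refine h2.congr_fderiv ?_
  rw [smul_smul, mul_comm]

lemma hasFDerivAt_Sf (β : ℝ) (x : Fin p → ℝ) : HasFDerivAt (Sf β) (LS β x) x :=
  HasFDerivAt.fun_sum fun i _ => hasFDerivAt_exp_comp β i x

lemma LS_apply (β : ℝ) (x : Fin p → ℝ) (j : Fin p) :
    LS β x (Pi.single j 1) = β * Real.exp (β * x j) := by
  simp only [LS, prj, ContinuousLinearMap.sum_apply, ContinuousLinearMap.smul_apply,
    ContinuousLinearMap.proj_apply, smul_eq_mul]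
  rw [Finset.sum_eq_single j]
  · simp
  · intro b _ hb
    simp [Pi.single_apply, hb]
  · simp

/-- softmax -/
noncomputable def sm (β : ℝ) (k : Fin p) (x : Fin p → ℝ) : ℝ := Real.exp (β * x k) / Sf β x

lemma sm_nonneg (hp : 0 < p) (β : ℝ) (k : Fin p) (x : Fin p → ℝ) : 0 ≤ sm β k x :=
  div_nonneg (Real.exp_pos _).le (Sf_pos hp β x).le

lemma sm_le_one (hp : 0 < p) (β : ℝ) (k : Fin p) (x : Fin p → ℝ) : sm β k x ≤ 1 := by
  rw [sm, div_le_one (Sf_pos hp β x)]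
  exact Finset.single_le_sum (f := fun i => Real.exp (β * x i))
    (fun i _ => (Real.exp_pos _).le) (Finset.mem_univ k)

lemma sm_sum (hp : 0 < p) (β : ℝ) (x : Fin p → ℝ) : ∑ k, sm β k x = 1 := by
  simp only [sm]
  rw [← Finset.sum_div]
  exact div_self (Sf_pos hp β x).ne'

noncomputable def F (β : ℝ) (x : Fin p → ℝ) : ℝ := β⁻¹ * Real.log (Sf β x)

lemma hasFDerivAt_F (hp : 0 < p) (β : ℝ) (x : Fin p → ℝ) :
    HasFDerivAt (F β) ((β⁻¹ * (Sf β x)⁻¹) • LS β x) x := by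
  have h := ((Real.hasDerivAt_log (Sf_pos hp β x).ne').comp_hasFDerivAt x
    (hasFDerivAt_Sf β x)).const_mul β⁻¹
  refine h.congr_fderiv ?_
  rw [smul_smul]

end Stmt11Aux

open Stmt11Aux in
theorem stmt11 (p : ℕ) (hp : 0 < p) (β : ℝ) (hβ : 0 < β) (g : ℝ → ℝ)
    (hg : ContDiff ℝ 3 g) (C1 C2 : ℝ)
    (h1 : ∀ t, |deriv g t| ≤ C1) (h2 : ∀ t, |iteratedDeriv 2 g t| ≤ C2) :
    ∀ x : Fin p → ℝ,
      ∑ j, ∑ k,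
        |pd j (pd k (fun y : Fin p → ℝ =>
          g (β⁻¹ * Real.log (∑ i, Real.exp (β * y i))))) x| ≤
      C2 + 2 * C1 * β := by
  -- basic facts about g
  have hg' : ContDiff ℝ (2 + 1) g := by norm_num at hg ⊢; exact hg
  have hgd2 : ContDiff ℝ 2 (deriv g) := (contDiff_succ_iff_deriv.mp hg').2.2
  have hgdiff : Differentiable ℝ g := (contDiff_succ_iff_deriv.mp hg').1
  have hgd2diff : Differentiable ℝ (deriv g) := hgd2.differentiable (by norm_num)
  have hDD : ∀ t : ℝ, HasDerivAt (deriv g) (iteratedDeriv 2 g t) t := by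
    intro t
    have := (hgd2diff t).hasDerivAt
    rwa [show iteratedDeriv 2 g = deriv (deriv g) by
      rw [iteratedDeriv_succ, iteratedDeriv_one]]
  -- the function m and its first partials
  set m : (Fin p → ℝ) → ℝ := fun y => g (β⁻¹ * Real.log (∑ i, Real.exp (β * y i))) with hm
  have hmF : m = fun y => g (F β y) := rfl
  have hasF_m : ∀ y : Fin p → ℝ,
      HasFDerivAt m ((deriv g (F β y) * (β⁻¹ * (Sf β y)⁻¹)) • LS β y) y := by
    intro y
    have h := (hgdiff (F β y)).hasDerivAt.comp_hasFDerivAt y (hasFDerivAt_F hp β y)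
    rw [hmF]
    refine h.congr_fderiv ?_
    rw [smul_smul]
  have pd_m : ∀ (k : Fin p) (y : Fin p → ℝ), pd k m y = deriv g (F β y) * sm β k y := by
    intro k y
    rw [pd, (hasF_m y).fderiv]
    simp only [ContinuousLinearMap.smul_apply, smul_eq_mul, LS_apply]
    rw [sm, div_eq_mul_inv]
    have hbb : β * β⁻¹ = 1 := mul_inv_cancel₀ hβ.ne'
    linear_combination (deriv g (F β y) * Real.exp (β * y k) * (Sf β y)⁻¹) * hbb
  -- derivative of sm
  have hasF_sm : ∀ (k : Fin p) (y : Fin p → ℝ),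
      HasFDerivAt (sm β k)
        (Real.exp (β * y k) • (-((Sf β y) ^ 2)⁻¹ • LS β y) +
          (Sf β y)⁻¹ • ((β * Real.exp (β * y k)) • prj k)) y := by
    intro k y
    have hinv : HasFDerivAt (fun z : Fin p → ℝ => (Sf β z)⁻¹)
        (-((Sf β y) ^ 2)⁻¹ • LS β y) y := by
      have := (hasDerivAt_inv (Sf_pos hp β y).ne').comp_hasFDerivAt y (hasFDerivAt_Sf β y)
      exact this
    have h3 := (hasFDerivAt_exp_comp β k y).mul hinv
    have heq : sm β k = fun z : Fin p → ℝ => Real.exp (β * z k) * (Sf β z)⁻¹ := by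
      funext z; rw [sm, div_eq_mul_inv]
    rw [heq]
    exact h3
  -- second partials
  have pd2 : ∀ (j k : Fin p) (x : Fin p → ℝ),
      pd j (pd k m) x =
        iteratedDeriv 2 g (F β x) * sm β j x * sm β k x +
        deriv g (F β x) * (β * ((if j = k then sm β k x else 0) - sm β j x * sm β k x)) := by
    intro j k x
    have hfun : pd k m = fun y => deriv g (F β y) * sm β k y := funext (pd_m k)
    rw [pd, hfun]
    have hc : HasFDerivAt (fun y : Fin p → ℝ => deriv g (F β y))
        ((iteratedDeriv 2 g (F β x) * (β⁻¹ * (Sf β x)⁻¹)) • LS β x) x := by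
      have h := (hDD (F β x)).comp_hasFDerivAt x (hasFDerivAt_F hp β x)
      refine h.congr_fderiv ?_
      rw [smul_smul]
    have hprod := hc.fun_mul (hasF_sm k x)
    rw [hprod.fderiv]
    have hS := (Sf_pos hp β x).ne'
    have hb := hβ.ne'
    simp only [ContinuousLinearMap.add_apply, ContinuousLinearMap.smul_apply, prj,
      ContinuousLinearMap.proj_apply, smul_eq_mul, LS_apply, Pi.single_apply]
    rw [sm, sm, F]
    by_cases hjk : j = k
    · subst hjk
      simp only [if_pos rfl]
      field_simp
      simp only [if_true]
      field_simp
      ring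
    · rw [if_neg (fun h => hjk h.symm), if_neg hjk]
      field_simp
      ring
  -- now the bound
  intro x
  have hC1 : 0 ≤ C1 := le_trans (abs_nonneg _) (h1 0)
  have hsnn : ∀ i, 0 ≤ sm β i x := fun i => sm_nonneg hp β i x
  have hsle : ∀ i, sm β i x ≤ 1 := fun i => sm_le_one hp β i x
  have hsum1 : ∑ i, sm β i x = 1 := sm_sum hp β x
  set s : Fin p → ℝ := fun i => sm β i x with hs
  have key : ∀ j, ∑ k, |(if j = k then s k else 0) - s j * s k| ≤ 2 * s j := by
    intro j
    rw [← Finset.add_sum_erase _ _ (Finset.mem_univ j)]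
    have e1 : |(if j = j then s j else 0) - s j * s j| = s j - s j * s j := by
      rw [if_pos rfl, abs_of_nonneg]
      nlinarith [hsnn j, hsle j]
    have e2 : ∑ k ∈ Finset.univ.erase j, |(if j = k then s k else 0) - s j * s k| =
        s j * (1 - s j) := by
      have : ∀ k ∈ Finset.univ.erase j,
          |(if j = k then s k else 0) - s j * s k| = s j * s k := by
        intro k hk
        rw [if_neg (Ne.symm (Finset.mem_erase.mp hk).1), zero_sub, abs_neg,
          abs_of_nonneg (mul_nonneg (hsnn j) (hsnn k))]
      rw [Finset.sum_congr rfl this, ← Finset.mul_sum,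
        Finset.sum_erase_eq_sub (Finset.mem_univ j), hsum1]
    rw [e1, e2]
    nlinarith [hsnn j, hsle j]
  calc ∑ j, ∑ k, |pd j (pd k m) x|
      ≤ ∑ j, ∑ k, (C2 * (s j * s k) +
          C1 * β * |(if j = k then s k else 0) - s j * s k|) := by
        refine Finset.sum_le_sum fun j _ => Finset.sum_le_sum fun k _ => ?_
        rw [pd2 j k x]
        refine (abs_add_le _ _).trans (add_le_add ?_ ?_)
        · rw [abs_mul, abs_mul, abs_of_nonneg (hsnn j), abs_of_nonneg (hsnn k), mul_assoc]
          exact mul_le_mul_of_nonneg_right (h2 _) (mul_nonneg (hsnn j) (hsnn k))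
        · rw [abs_mul, abs_mul, abs_of_nonneg hβ.le,
            show C1 * β * |(if j = k then s k else 0) - s j * s k| =
              C1 * (β * |(if j = k then s k else 0) - s j * s k|) by ring]
          exact mul_le_mul (h1 _) le_rfl (by positivity) hC1
    _ = C2 * ((∑ j, s j) * (∑ k, s k)) +
          C1 * β * ∑ j, ∑ k, |(if j = k then s k else 0) - s j * s k| := by
        have hA : ∑ j, ∑ k, C2 * (s j * s k) = C2 * ((∑ j, s j) * (∑ k, s k)) := by
          rw [Finset.sum_mul_sum, Finset.mul_sum]
          exact Finset.sum_congr rfl fun j _ => by rw [Finset.mul_sum]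
        have hB : ∑ j, ∑ k, C1 * β * |(if j = k then s k else 0) - s j * s k| =
            C1 * β * ∑ j, ∑ k, |(if j = k then s k else 0) - s j * s k| := by
          rw [Finset.mul_sum]
          exact Finset.sum_congr rfl fun j _ => by rw [Finset.mul_sum]
        simp only [Finset.sum_add_distrib]
        rw [hA, hB]
    _ ≤ C2 + 2 * C1 * β := by
        rw [hsum1, mul_one, mul_one]
        have hb2 : ∑ j, ∑ k, |(if j = k then s k else 0) - s j * s k| ≤ 2 := by
          calc ∑ j, ∑ k, |(if j = k then s k else 0) - s j * s k|
              ≤ ∑ j, 2 * s j := Finset.sum_le_sum fun j _ => key j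
            _ = 2 := by rw [← Finset.mul_sum, hsum1, mul_one]
        nlinarith [mul_nonneg hC1 hβ.le]
end

section
/- Let F_β(x) = β⁻¹ log(∑_{j=1}^p e^{βx_j}) on ℝ^p with β > 0, p ≥ 2. Then for the third-order partial derivatives there exist nonnegative functions U_{jkl} : ℝ^p → ℝ such that |∂_j∂_k∂_l (g∘F_β)(x)| ≤ U_{jkl}(x) for all x, and ∑_{j,k,l=1}^p U_{jkl}(x) ≤ C(‖g‴‖_∞ + β‖g″‖_∞ + β²‖g′‖_∞) for all x ∈ ℝ^p, where C is an absolute constant and g ∈ C³(ℝ) with bounded derivatives up to order 3. -/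
namespace Stmt13

variable {p : ℕ}

noncomputable def D (c : Fin p → ℝ) : (Fin p → ℝ) →L[ℝ] ℝ :=
  ∑ i, c i • (ContinuousLinearMap.proj i : (Fin p → ℝ) →L[ℝ] ℝ)

lemma D_apply (c v : Fin p → ℝ) : D c v = ∑ i, c i * v i := by
  simp [D]

lemma D_single (c : Fin p → ℝ) (j : Fin p) : D c (Pi.single j 1) = c j := by
  simp [D_apply, Pi.single_apply, mul_ite, Finset.sum_ite_eq']

lemma D_smul (r : ℝ) (c : Fin p → ℝ) : r • D c = D (fun i => r * c i) := by
  refine ContinuousLinearMap.ext fun v => ?_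
  simp [D_apply, Finset.mul_sum, mul_assoc]

lemma D_add (c d : Fin p → ℝ) : D c + D d = D (fun i => c i + d i) := by
  refine ContinuousLinearMap.ext fun v => ?_
  simp [D_apply, add_mul, Finset.sum_add_distrib]

lemma D_sub (c d : Fin p → ℝ) : D c - D d = D (fun i => c i - d i) := by
  refine ContinuousLinearMap.ext fun v => ?_
  simp [D_apply, sub_mul, Finset.sum_sub_distrib]

lemma D_neg (c : Fin p → ℝ) : -D c = D (fun i => -c i) := by
  refine ContinuousLinearMap.ext fun v => ?_
  simp [D_apply, Finset.sum_neg_distrib, neg_mul]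

def Nice (c : (Fin p → ℝ) → Fin p → ℝ) (f : (Fin p → ℝ) → ℝ) : Prop :=
  ∀ x, HasFDerivAt f (D (c x)) x

lemma Nice.pd_eq {c : (Fin p → ℝ) → Fin p → ℝ} {f : (Fin p → ℝ) → ℝ} (h : Nice c f) (j : Fin p) (x : Fin p → ℝ) : pd j f x = c x j := by
  rw [pd, (h x).fderiv, D_single]

lemma Nice.congr {c c' : (Fin p → ℝ) → Fin p → ℝ} {f : (Fin p → ℝ) → ℝ} (h : Nice c f) (hc : ∀ x i, c x i = c' x i) : Nice c' f := by
  intro x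
  have : c' x = c x := funext fun i => (hc x i).symm
  rw [this]; exact h x

lemma Nice.congr_fun {c : (Fin p → ℝ) → Fin p → ℝ} {f f' : (Fin p → ℝ) → ℝ} (h : Nice c f) (hf : ∀ y, f y = f' y) : Nice c f' := by
  have : f = f' := funext hf
  rwa [this] at h

lemma Nice.add {c d : (Fin p → ℝ) → Fin p → ℝ} {f h : (Fin p → ℝ) → ℝ} (hf : Nice c f) (hh : Nice d h) :
    Nice (fun x i => c x i + d x i) (fun x => f x + h x) := fun x => by
  simpa [D_add] using (hf x).fun_add (hh x)

lemma Nice.sub {c d : (Fin p → ℝ) → Fin p → ℝ} {f h : (Fin p → ℝ) → ℝ} (hf : Nice c f) (hh : Nice d h) :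
    Nice (fun x i => c x i - d x i) (fun x => f x - h x) := fun x => by
  simpa [D_sub] using (hf x).fun_sub (hh x)

lemma Nice.const_mul {c : (Fin p → ℝ) → Fin p → ℝ} {f : (Fin p → ℝ) → ℝ} (hf : Nice c f) (r : ℝ) :
    Nice (fun x i => r * c x i) (fun x => r * f x) := fun x => by
  simpa [D_smul] using (hf x).const_mul r

lemma Nice.mul {c d : (Fin p → ℝ) → Fin p → ℝ} {f h : (Fin p → ℝ) → ℝ} (hf : Nice c f) (hh : Nice d h) :
    Nice (fun x i => f x * d x i + h x * c x i) (fun x => f x * h x) := fun x => by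
  simpa [D_smul, D_add] using (hf x).fun_mul (hh x)

lemma Nice.comp {c : (Fin p → ℝ) → Fin p → ℝ} {f : (Fin p → ℝ) → ℝ} (G G' : ℝ → ℝ) (hG : ∀ t, HasDerivAt G (G' t) t) (hf : Nice c f) :
    Nice (fun x i => G' (f x) * c x i) (fun x => G (f x)) := fun x => by
  simpa [D_smul, Function.comp_def] using (hG (f x)).comp_hasFDerivAt x (hf x)

lemma Nice.inv {c : (Fin p → ℝ) → Fin p → ℝ} {f : (Fin p → ℝ) → ℝ} (hf : Nice c f) (h0 : ∀ x, f x ≠ 0) :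
    Nice (fun x i => -(f x ^ 2)⁻¹ * c x i) (fun x => (f x)⁻¹) := fun x => by
  simpa [D_smul, D_neg, Function.comp_def, neg_mul] using (hasDerivAt_inv (h0 x)).comp_hasFDerivAt x (hf x)

noncomputable def Sf (β : ℝ) (x : Fin p → ℝ) : ℝ := ∑ i, Real.exp (β * x i)

noncomputable def piF (β : ℝ) (l : Fin p) (x : Fin p → ℝ) : ℝ := Real.exp (β * x l) / Sf β x

noncomputable def dl (i j : Fin p) : ℝ := if i = j then 1 else 0

lemma Sf_pos [Nonempty (Fin p)] (β : ℝ) (x : Fin p → ℝ) : 0 < Sf β x :=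
  Finset.sum_pos (fun i _ => Real.exp_pos _) Finset.univ_nonempty

lemma piF_nonneg [Nonempty (Fin p)] (β : ℝ) (l : Fin p) (x : Fin p → ℝ) : 0 ≤ piF β l x :=
  div_nonneg (Real.exp_pos _).le (Sf_pos β x).le

lemma dl_nonneg (i j : Fin p) : 0 ≤ dl i j := by
  unfold dl; split <;> norm_num

lemma piF_sum [Nonempty (Fin p)] (β : ℝ) (x : Fin p → ℝ) : ∑ l, piF β l x = 1 := by
  unfold piF
  rw [← Finset.sum_div]
  exact div_self (Sf_pos β x).ne'

lemma NS (β : ℝ) : Nice (fun x i => β * Real.exp (β * x i)) (Sf (p := p) β) := by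
  intro x
  have h : ∀ i : Fin p, HasFDerivAt (fun y : Fin p → ℝ => Real.exp (β * y i))
      ((β * Real.exp (β * x i)) • (ContinuousLinearMap.proj i : (Fin p → ℝ) →L[ℝ] ℝ)) x := by
    intro i
    have h0 : HasFDerivAt (fun y : Fin p → ℝ => y i)
        (ContinuousLinearMap.proj i : (Fin p → ℝ) →L[ℝ] ℝ) x :=
      hasFDerivAt_apply i x
    have h1 := (h0.const_mul β).exp
    have h2 : (β * Real.exp (β * x i)) • (ContinuousLinearMap.proj i : (Fin p → ℝ) →L[ℝ] ℝ)
        = Real.exp (β * x i) • β • ContinuousLinearMap.proj i := by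
      rw [smul_smul, mul_comm]
    rw [h2]; exact h1
  exact HasFDerivAt.fun_sum (fun i _ => h i)

lemma Nproj (l : Fin p) : Nice (fun _ i => dl i l) (fun x : Fin p → ℝ => x l) := by
  intro x
  have hD : D (fun i : Fin p => dl i l) = (ContinuousLinearMap.proj l : (Fin p → ℝ) →L[ℝ] ℝ) := by
    refine ContinuousLinearMap.ext fun v => ?_
    simp [D_apply, dl, ite_mul, Finset.sum_ite_eq']
  rw [hD]
  exact hasFDerivAt_apply l x

lemma Nexp (β : ℝ) (l : Fin p) :
    Nice (fun x i => Real.exp (β * x l) * β * dl i l) (fun x : Fin p → ℝ => Real.exp (β * x l)) := by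
  have hG : ∀ t : ℝ, HasDerivAt (fun s => Real.exp (β * s)) (Real.exp (β * t) * β) t := by
    intro t
    have h0 : HasDerivAt (fun s : ℝ => β * s) β t := by
      simpa using HasDerivAt.const_mul β (hasDerivAt_id t)
    exact h0.exp
  have := Nice.comp (fun s => Real.exp (β * s)) (fun t => Real.exp (β * t) * β) hG (Nproj l)
  exact this.congr (fun x i => by ring)

lemma Npi [Nonempty (Fin p)] (β : ℝ) (l : Fin p) :
    Nice (fun x i => β * (dl i l * piF β l x - piF β i x * piF β l x)) (piF β l) := by
  have hinv : Nice (fun x i => -(Sf β x ^ 2)⁻¹ * (β * Real.exp (β * x i)))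
      (fun x : Fin p → ℝ => (Sf β x)⁻¹) :=
    (NS β).inv (fun x => (Sf_pos β x).ne')
  have hmul := (Nexp β l).mul hinv
  refine (hmul.congr_fun (fun y => ?_)).congr (fun x i => ?_)
  · rw [piF, div_eq_mul_inv]
  · have hS := (Sf_pos (p := p) β x).ne'
    unfold piF
    field_simp
    ring

lemma NF [Nonempty (Fin p)] {β : ℝ} (hβ : β ≠ 0) :
    Nice (fun x i => piF β i x) (fun x : Fin p → ℝ => β⁻¹ * Real.log (Sf β x)) := by
  have hlog : Nice (fun x i => (Sf β x)⁻¹ * (β * Real.exp (β * x i)))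
      (fun x : Fin p → ℝ => Real.log (Sf β x)) :=
    fun x => by simpa [D_smul] using ((NS β) x).log (Sf_pos β x).ne'
  refine (hlog.const_mul β⁻¹).congr (fun x i => ?_)
  have hS := (Sf_pos (p := p) β x).ne'
  unfold piF
  field_simp

lemma key_bound (β A B G3 C1 C2 C3 pj pk pl djk djl dkl : ℝ)
    (hA : |A| ≤ C1) (hB : |B| ≤ C2) (hG : |G3| ≤ C3) (hb : 0 ≤ β)
    (hpj : 0 ≤ pj) (hpk : 0 ≤ pk) (hpl : 0 ≤ pl)
    (hjk : 0 ≤ djk) (hjl : 0 ≤ djl) (hkl : 0 ≤ dkl) :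
    |A * (β * (dkl * (β * (djl * pl - pj * pl)) - (pk * (β * (djl * pl - pj * pl)) + pl * (β * (djk * pk - pj * pk))))) + (β * (dkl * pl - pk * pl)) * (B * pj) + (pl * (B * (β * (djk * pk - pj * pk)) + pk * (G3 * pj)) + (B * pk) * (β * (djl * pl - pj * pl)))|
    ≤ C3 * (pj * (pk * pl)) + C2 * β * (djk * (pk * pl) + djl * (pk * pl) + dkl * (pj * pl) + 3 * (pj * (pk * pl))) + C1 * β ^ 2 * (dkl * (djl * pl) + dkl * (pj * pl) + djl * (pk * pl) + djk * (pk * pl) + 2 * (pj * (pk * pl))) := by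
  obtain ⟨hA1, hA2⟩ := abs_le.mp hA
  obtain ⟨hB1, hB2⟩ := abs_le.mp hB
  obtain ⟨hG1, hG2⟩ := abs_le.mp hG
  have hr1 : 0 ≤ β*(β*(dkl*(djl*pl))) := mul_nonneg hb (mul_nonneg hb (mul_nonneg hkl (mul_nonneg hjl hpl)))
  have hr1p : 0 ≤ (C1 - A) * (β*(β*(dkl*(djl*pl)))) := mul_nonneg (by linarith) hr1
  have hr1m : 0 ≤ (C1 + A) * (β*(β*(dkl*(djl*pl)))) := mul_nonneg (by linarith) hr1
  have hr2 : 0 ≤ β*(β*(dkl*(pj*pl))) := mul_nonneg hb (mul_nonneg hb (mul_nonneg hkl (mul_nonneg hpj hpl)))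
  have hr2p : 0 ≤ (C1 - A) * (β*(β*(dkl*(pj*pl)))) := mul_nonneg (by linarith) hr2
  have hr2m : 0 ≤ (C1 + A) * (β*(β*(dkl*(pj*pl)))) := mul_nonneg (by linarith) hr2
  have hr3 : 0 ≤ β*(β*(pk*(djl*pl))) := mul_nonneg hb (mul_nonneg hb (mul_nonneg hpk (mul_nonneg hjl hpl)))
  have hr3p : 0 ≤ (C1 - A) * (β*(β*(pk*(djl*pl)))) := mul_nonneg (by linarith) hr3
  have hr3m : 0 ≤ (C1 + A) * (β*(β*(pk*(djl*pl)))) := mul_nonneg (by linarith) hr3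
  have hr4 : 0 ≤ β*(β*(pk*(pj*pl))) := mul_nonneg hb (mul_nonneg hb (mul_nonneg hpk (mul_nonneg hpj hpl)))
  have hr4p : 0 ≤ (C1 - A) * (β*(β*(pk*(pj*pl)))) := mul_nonneg (by linarith) hr4
  have hr4m : 0 ≤ (C1 + A) * (β*(β*(pk*(pj*pl)))) := mul_nonneg (by linarith) hr4
  have hr5 : 0 ≤ β*(β*(pl*(djk*pk))) := mul_nonneg hb (mul_nonneg hb (mul_nonneg hpl (mul_nonneg hjk hpk)))
  have hr5p : 0 ≤ (C1 - A) * (β*(β*(pl*(djk*pk)))) := mul_nonneg (by linarith) hr5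
  have hr5m : 0 ≤ (C1 + A) * (β*(β*(pl*(djk*pk)))) := mul_nonneg (by linarith) hr5
  have hr6 : 0 ≤ β*(β*(pl*(pj*pk))) := mul_nonneg hb (mul_nonneg hb (mul_nonneg hpl (mul_nonneg hpj hpk)))
  have hr6p : 0 ≤ (C1 - A) * (β*(β*(pl*(pj*pk)))) := mul_nonneg (by linarith) hr6
  have hr6m : 0 ≤ (C1 + A) * (β*(β*(pl*(pj*pk)))) := mul_nonneg (by linarith) hr6
  have hs1 : 0 ≤ β*(dkl*(pj*pl)) := mul_nonneg hb (mul_nonneg hkl (mul_nonneg hpj hpl))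
  have hs1p : 0 ≤ (C2 - B) * (β*(dkl*(pj*pl))) := mul_nonneg (by linarith) hs1
  have hs1m : 0 ≤ (C2 + B) * (β*(dkl*(pj*pl))) := mul_nonneg (by linarith) hs1
  have hs2 : 0 ≤ β*(pj*(pk*pl)) := mul_nonneg hb (mul_nonneg hpj (mul_nonneg hpk hpl))
  have hs2p : 0 ≤ (C2 - B) * (β*(pj*(pk*pl))) := mul_nonneg (by linarith) hs2
  have hs2m : 0 ≤ (C2 + B) * (β*(pj*(pk*pl))) := mul_nonneg (by linarith) hs2
  have hs3 : 0 ≤ β*(pl*(djk*pk)) := mul_nonneg hb (mul_nonneg hpl (mul_nonneg hjk hpk))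
  have hs3p : 0 ≤ (C2 - B) * (β*(pl*(djk*pk))) := mul_nonneg (by linarith) hs3
  have hs3m : 0 ≤ (C2 + B) * (β*(pl*(djk*pk))) := mul_nonneg (by linarith) hs3
  have hs5 : 0 ≤ β*(pk*(djl*pl)) := mul_nonneg hb (mul_nonneg hpk (mul_nonneg hjl hpl))
  have hs5p : 0 ≤ (C2 - B) * (β*(pk*(djl*pl))) := mul_nonneg (by linarith) hs5
  have hs5m : 0 ≤ (C2 + B) * (β*(pk*(djl*pl))) := mul_nonneg (by linarith) hs5
  have ht1 : 0 ≤ pj*(pk*pl) := mul_nonneg hpj (mul_nonneg hpk hpl)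
  have ht1p : 0 ≤ (C3 - G3) * (pj*(pk*pl)) := mul_nonneg (by linarith) ht1
  have ht1m : 0 ≤ (C3 + G3) * (pj*(pk*pl)) := mul_nonneg (by linarith) ht1
  rw [abs_le]
  constructor <;> linarith [hr1p, hr1m, hr2p, hr2m, hr3p, hr3m, hr4p, hr4m, hr5p, hr5m, hr6p, hr6m, hs1p, hs1m, hs2p, hs2m, hs3p, hs3m, hs5p, hs5m, ht1p, ht1m]

end Stmt13

open Stmt13 in
theorem stmt13 : ∃ C : ℝ, 0 < C ∧
    ∀ (p : ℕ) (_ : 2 ≤ p) (β : ℝ) (_ : 0 < β) (g : ℝ → ℝ) (_ : ContDiff ℝ 3 g)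
      (C1 C2 C3 : ℝ) (_ : ∀ t, |deriv g t| ≤ C1) (_ : ∀ t, |iteratedDeriv 2 g t| ≤ C2)
      (_ : ∀ t, |iteratedDeriv 3 g t| ≤ C3),
      ∃ U : Fin p → Fin p → Fin p → (Fin p → ℝ) → ℝ,
        (∀ j k l x, 0 ≤ U j k l x) ∧
        (∀ j k l x,
          |pd j (pd k (pd l (fun y : Fin p → ℝ =>
            g (β⁻¹ * Real.log (∑ i, Real.exp (β * y i)))))) x| ≤ U j k l x) ∧
        (∀ x, ∑ j, ∑ k, ∑ l, U j k l x ≤ C * (C3 + β * C2 + β ^ 2 * C1)) := by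
  refine ⟨6, by norm_num, ?_⟩
  intro p hp β hβ g hg C1 C2 C3 hC1 hC2 hC3
  haveI : Nonempty (Fin p) := ⟨⟨0, by omega⟩⟩
  -- derivatives of g
  have h32 : ContDiff ℝ 2 (deriv g) := by
    have := (contDiff_succ_iff_deriv (n := 2)).mp (by exact_mod_cast hg)
    exact this.2.2
  have h21 : ContDiff ℝ 1 (deriv (deriv g)) := by
    have := (contDiff_succ_iff_deriv (n := 1)).mp h32
    exact this.2.2
  have hg1 : ∀ t, HasDerivAt g (deriv g t) t := fun t =>
    ((hg.differentiable (by norm_num)).differentiableAt).hasDerivAt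
  have hg2 : ∀ t, HasDerivAt (deriv g) (deriv (deriv g) t) t := fun t =>
    ((h32.differentiable (by norm_num)).differentiableAt).hasDerivAt
  have hg3 : ∀ t, HasDerivAt (deriv (deriv g)) (deriv (deriv (deriv g)) t) t := fun t =>
    ((h21.differentiable (by norm_num)).differentiableAt).hasDerivAt
  have hC2' : ∀ t, |deriv (deriv g) t| ≤ C2 := by
    intro t
    have := hC2 t
    simpa [iteratedDeriv_succ, iteratedDeriv_zero] using this
  have hC3' : ∀ t, |deriv (deriv (deriv g)) t| ≤ C3 := by
    intro t
    have := hC3 t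
    simpa [iteratedDeriv_succ, iteratedDeriv_zero] using this
  have hC1nn : 0 ≤ C1 := le_trans (abs_nonneg _) (hC1 0)
  have hC2nn : 0 ≤ C2 := le_trans (abs_nonneg _) (hC2 0)
  have hC3nn : 0 ≤ C3 := le_trans (abs_nonneg _) (hC3 0)
  -- Nice structures
  have hNF := NF (p := p) hβ.ne'
  have hNπ : ∀ l, Nice (fun x i => β * (dl i l * piF β l x - piF β i x * piF β l x)) (piF β l) :=
    Npi (p := p) β
  have hNa := Nice.comp (deriv g) (deriv (deriv g)) hg2 hNF
  have hNb := Nice.comp (deriv (deriv g)) (deriv (deriv (deriv g))) hg3 hNF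
  have hNf : Nice (fun x i => deriv g (β⁻¹ * Real.log (Sf β x)) * piF β i x)
      (fun y : Fin p → ℝ => g (β⁻¹ * Real.log (∑ i, Real.exp (β * y i)))) :=
    Nice.comp g (deriv g) hg1 hNF
  have e1 : ∀ l, pd l (fun y : Fin p → ℝ => g (β⁻¹ * Real.log (∑ i, Real.exp (β * y i))))
      = fun x => deriv g (β⁻¹ * Real.log (Sf β x)) * piF β l x :=
    fun l => funext fun x => hNf.pd_eq l x
  have e2 : ∀ k l, pd k (pd l (fun y : Fin p → ℝ =>
        g (β⁻¹ * Real.log (∑ i, Real.exp (β * y i)))))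
      = fun x => deriv g (β⁻¹ * Real.log (Sf β x)) *
            (β * (dl k l * piF β l x - piF β k x * piF β l x))
          + piF β l x * (deriv (deriv g) (β⁻¹ * Real.log (Sf β x)) * piF β k x) := by
    intro k l
    rw [e1 l]
    exact funext fun x => (hNa.mul (hNπ l)).pd_eq k x
  have hN3 : ∀ k l : Fin p, Nice
      (fun x i =>
        deriv g (β⁻¹ * Real.log (Sf β x)) *
            (β * (dl k l * (β * (dl i l * piF β l x - piF β i x * piF β l x))
              - (piF β k x * (β * (dl i l * piF β l x - piF β i x * piF β l x))
                 + piF β l x * (β * (dl i k * piF β k x - piF β i x * piF β k x)))))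
          + β * (dl k l * piF β l x - piF β k x * piF β l x) *
              (deriv (deriv g) (β⁻¹ * Real.log (Sf β x)) * piF β i x)
        + (piF β l x * (deriv (deriv g) (β⁻¹ * Real.log (Sf β x)) *
              (β * (dl i k * piF β k x - piF β i x * piF β k x))
            + piF β k x * (deriv (deriv (deriv g)) (β⁻¹ * Real.log (Sf β x)) * piF β i x))
          + deriv (deriv g) (β⁻¹ * Real.log (Sf β x)) * piF β k x *
              (β * (dl i l * piF β l x - piF β i x * piF β l x))))
      (fun x => deriv g (β⁻¹ * Real.log (Sf β x)) *
            (β * (dl k l * piF β l x - piF β k x * piF β l x))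
          + piF β l x * (deriv (deriv g) (β⁻¹ * Real.log (Sf β x)) * piF β k x)) := by
    intro k l
    exact (hNa.mul ((((hNπ l).const_mul (dl k l)).sub ((hNπ k).mul (hNπ l))).const_mul β)).add
      ((hNπ l).mul (hNb.mul (hNπ k)))
  refine ⟨fun j k l x =>
      C3 * (piF β j x * (piF β k x * piF β l x))
    + C2 * β * (dl j k * (piF β k x * piF β l x) + dl j l * (piF β k x * piF β l x)
        + dl k l * (piF β j x * piF β l x) + 3 * (piF β j x * (piF β k x * piF β l x)))
    + C1 * β ^ 2 * (dl k l * (dl j l * piF β l x) + dl k l * (piF β j x * piF β l x)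
        + dl j l * (piF β k x * piF β l x) + dl j k * (piF β k x * piF β l x)
        + 2 * (piF β j x * (piF β k x * piF β l x))), ?_, ?_, ?_⟩
  · intro j k l x
    have hb := hβ.le
    have hpj := piF_nonneg β j x
    have hpk := piF_nonneg β k x
    have hpl := piF_nonneg β l x
    have hjk := dl_nonneg j k
    have hjl := dl_nonneg j l
    have hkl := dl_nonneg k l
    have hb2 : (0:ℝ) ≤ β ^ 2 := sq_nonneg β
    repeat' first
      | assumption
      | exact (Real.exp_pos _).le
      | exact (Sf_pos β x).le
      | apply add_nonneg
      | apply mul_nonneg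
    all_goals norm_num
  · intro j k l x
    have e3 : pd j (pd k (pd l (fun y : Fin p → ℝ =>
          g (β⁻¹ * Real.log (∑ i, Real.exp (β * y i)))))) x
        = deriv g (β⁻¹ * Real.log (Sf β x)) *
            (β * (dl k l * (β * (dl j l * piF β l x - piF β j x * piF β l x))
              - (piF β k x * (β * (dl j l * piF β l x - piF β j x * piF β l x))
                 + piF β l x * (β * (dl j k * piF β k x - piF β j x * piF β k x)))))
          + β * (dl k l * piF β l x - piF β k x * piF β l x) *
              (deriv (deriv g) (β⁻¹ * Real.log (Sf β x)) * piF β j x)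
        + (piF β l x * (deriv (deriv g) (β⁻¹ * Real.log (Sf β x)) *
              (β * (dl j k * piF β k x - piF β j x * piF β k x))
            + piF β k x * (deriv (deriv (deriv g)) (β⁻¹ * Real.log (Sf β x)) * piF β j x))
          + deriv (deriv g) (β⁻¹ * Real.log (Sf β x)) * piF β k x *
              (β * (dl j l * piF β l x - piF β j x * piF β l x))) := by
      rw [e2 k l]
      exact (hN3 k l).pd_eq j x
    rw [e3]
    exact key_bound β _ _ _ C1 C2 C3 (piF β j x) (piF β k x) (piF β l x)
      (dl j k) (dl j l) (dl k l) (hC1 _) (hC2' _) (hC3' _) hβ.le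
      (piF_nonneg β j x) (piF_nonneg β k x) (piF_nonneg β l x)
      (dl_nonneg j k) (dl_nonneg j l) (dl_nonneg k l)
  · intro x
    have hs := piF_sum β x
    have key : ∑ j, ∑ k, ∑ l, (C3 * (piF β j x * (piF β k x * piF β l x))
      + C2 * β * (dl j k * (piF β k x * piF β l x) + dl j l * (piF β k x * piF β l x)
          + dl k l * (piF β j x * piF β l x) + 3 * (piF β j x * (piF β k x * piF β l x)))
      + C1 * β ^ 2 * (dl k l * (dl j l * piF β l x) + dl k l * (piF β j x * piF β l x)
          + dl j l * (piF β k x * piF β l x) + dl j k * (piF β k x * piF β l x)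
          + 2 * (piF β j x * (piF β k x * piF β l x))))
        = C3 + C2 * β * 6 + C1 * β ^ 2 * 6 := by
      simp [Finset.sum_add_distrib, ← Finset.mul_sum, ← Finset.sum_mul, dl, ite_mul,
        Finset.sum_ite_eq, hs]
      ring
    rw [key]
    nlinarith [hC3nn, hC2nn, hC1nn, mul_nonneg hC2nn hβ.le, mul_nonneg hC1nn (sq_nonneg β)]
end
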